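/- For every x ≥ 0, the infimum of ∫₀¹ (g(s)²/φ(s)) 1_{φ(s)>0} ds over all integrable g : [0,1] → ℝ such that φ(s) := v₀ + ∫₀^s g(r) dr is nonnegative on [0,1] with φ(1) = x, is equal to 4 times the infimum of ∫₀¹ h(s)² ds over all square-integrable h : [0,1] → ℝ such that ψ(s) := √v₀ + ∫₀^s h(r) dr is nonnegative on [0,1] with ψ(1) = √x. -/

import Mathlib

open MeasureTheory Filter Topology Set
open scoped ENNReal

lemma core_ineq {a b : ℝ} (hab : a < b) {g φ : ℝ → ℝ} (ε : ℝ) (hε : 0 < ε)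
    (hg : IntegrableOn g (Set.Icc a b))
    (hφeq : ∀ s ∈ Set.Icc a b, φ s = φ a + ∫ r in a..s, g r)
    (hφ0 : ∀ s ∈ Set.Icc a b, 0 ≤ φ s)
    (hInt : IntegrableOn (fun s => g s ^ 2 / (φ s + ε)) (Set.Icc a b)) :
    4 * (Real.sqrt (φ b + ε) - Real.sqrt (φ a + ε)) ^ 2 / (b - a)
      ≤ ∫ s in Set.Icc a b, g s ^ 2 / (φ s + ε) := by
  have ha : a ∈ Set.Icc a b := ⟨le_refl a, hab.le⟩
  have hb : b ∈ Set.Icc a b := ⟨hab.le, le_refl b⟩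
  set A := Real.sqrt (φ a + ε) with hAdef
  set B := Real.sqrt (φ b + ε) with hBdef
  have hA : 0 < A := Real.sqrt_pos.2 (by linarith [hφ0 a ha])
  have hB : 0 < B := Real.sqrt_pos.2 (by linarith [hφ0 b hb])
  have hA2 : A ^ 2 = φ a + ε := Real.sq_sqrt (by linarith [hφ0 a ha])
  have hB2 : B ^ 2 = φ b + ε := Real.sq_sqrt (by linarith [hφ0 b hb])
  have hba : (0:ℝ) < b - a := by linarith
  set L := (B - A) / (b - a) with hLdef
  set ρ : ℝ → ℝ := fun s => A + L * (s - a) with hρdef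
  have hρa : ρ a = A := by simp [hρdef]
  have hρb : ρ b = B := by
    simp only [hρdef, hLdef]
    field_simp
    ring
  have hρpos : ∀ s ∈ Set.Icc a b, 0 < ρ s := by
    intro s hs
    rcases le_total A B with h | h
    · have : 0 ≤ L := div_nonneg (by linarith) hba.le
      have : 0 ≤ L * (s - a) := mul_nonneg this (by linarith [hs.1])
      simp only [hρdef]; linarith
    · have hL : L ≤ 0 := div_nonpos_of_nonpos_of_nonneg (by linarith) hba.le
      have h1 : L * (s - a) ≥ L * (b - a) := by
        apply mul_le_mul_of_nonpos_left _ hL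
        linarith [hs.2]
      have h2 : L * (b - a) = B - A := by
        simp only [hLdef]; field_simp
      simp only [hρdef]; linarith
  set t : ℝ → ℝ := fun s => 2 * L / ρ s with htdef
  set t' : ℝ → ℝ := fun s => -(2 * L ^ 2) / (ρ s) ^ 2 with ht'def
  have hρderiv : ∀ s : ℝ, HasDerivAt ρ L s := by
    intro s
    have h1 : HasDerivAt (fun u : ℝ => u - a) 1 s := (hasDerivAt_id s).sub_const a
    have h2 := (h1.const_mul L).const_add A
    simpa [hρdef] using h2
  have htderiv : ∀ s ∈ Set.Icc a b, HasDerivAt t (t' s) s := by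
    intro s hs
    have hne : ρ s ≠ 0 := (hρpos s hs).ne'
    have h := (hasDerivAt_const s (2 * L)).div (hρderiv s) hne
    apply h.congr_deriv
    simp only [ht'def]
    field_simp
    ring
  have hρcont : Continuous ρ := by
    simp only [hρdef]; fun_prop
  have htcont : ContinuousOn t (Set.Icc a b) :=
    continuousOn_const.div hρcont.continuousOn (fun s hs => (hρpos s hs).ne')
  have ht'cont : ContinuousOn t' (Set.Icc a b) :=
    continuousOn_const.div (by fun_prop) (fun s hs => pow_ne_zero 2 (hρpos s hs).ne')
  have hφcont : ContinuousOn φ (Set.Icc a b) := by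
    have h1 : IntegrableOn g (Set.uIcc a b) := by
      rwa [Set.uIcc_of_le hab.le]
    have h2 : ContinuousOn (fun s => φ a + ∫ r in a..s, g r) (Set.Icc a b) := by
      have := intervalIntegral.continuousOn_primitive_interval (f := g) (μ := volume) (a := a) (b := b) h1
      rw [Set.uIcc_of_le hab.le] at this
      exact continuousOn_const.add this
    exact h2.congr hφeq
  have ht'int : IntegrableOn t' (Set.Icc a b) := ht'cont.integrableOn_Icc
  -- FTC for t'
  have hFTC : ∀ s ∈ Set.Icc a b, ∫ r in Set.Icc s b, t' r = t b - t s := by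
    intro s hs
    have hsub : Set.uIcc s b ⊆ Set.Icc a b := by
      rw [Set.uIcc_of_le hs.2]
      exact Set.Icc_subset_Icc hs.1 le_rfl
    have h1 : ∫ r in s..b, t' r = t b - t s := by
      apply intervalIntegral.integral_eq_sub_of_hasDerivAt
      · intro x hx
        exact htderiv x (hsub hx)
      · exact (ht'cont.mono hsub).intervalIntegrable
    rw [MeasureTheory.integral_Icc_eq_integral_Ioc, ← intervalIntegral.integral_of_le hs.2]
    exact h1
  -- value of ∫ g over Icc
  have hgIcc : ∫ s in Set.Icc a b, g s = φ b - φ a := by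
    have := hφeq b hb
    rw [MeasureTheory.integral_Icc_eq_integral_Ioc, ← intervalIntegral.integral_of_le hab.le]
    linarith
  -- Fubini identity
  have key : ∫ s in Set.Icc a b, g s * (t b - t s) = ∫ r in Set.Icc a b, t' r * (φ r - φ a) := by
    set F : ℝ → ℝ → ℝ := fun s r => if s ≤ r then g s * t' r else 0 with hFdef
    have hFint : Integrable (Function.uncurry F)
        ((volume.restrict (Set.Icc a b)).prod (volume.restrict (Set.Icc a b))) := by
      have h1 : Integrable (fun p : ℝ × ℝ => g p.1 * t' p.2)
          ((volume.restrict (Set.Icc a b)).prod (volume.restrict (Set.Icc a b))) :=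
        Integrable.mul_prod hg ht'int
      have h2 : Function.uncurry F =
          Set.indicator {p : ℝ × ℝ | p.1 ≤ p.2} (fun p => g p.1 * t' p.2) := by
        funext p
        simp only [Function.uncurry, hFdef, Set.indicator_apply, Set.mem_setOf_eq]
      rw [h2]
      exact h1.indicator (isClosed_le continuous_fst continuous_snd).measurableSet
    have swap := MeasureTheory.integral_integral_swap hFint
    have lhs_eq : ∫ s in Set.Icc a b, (∫ r in Set.Icc a b, F s r)
        = ∫ s in Set.Icc a b, g s * (t b - t s) := by
      apply MeasureTheory.setIntegral_congr_fun measurableSet_Icc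
      intro s hs
      show (∫ r in Set.Icc a b, F s r) = g s * (t b - t s)
      have hFs : (fun r => F s r) = fun r => g s * (Set.indicator (Set.Ici s) t' r) := by
        funext r
        simp only [hFdef, Set.indicator_apply, Set.mem_Ici, mul_ite, mul_zero]
      rw [hFs, MeasureTheory.integral_const_mul, MeasureTheory.setIntegral_indicator measurableSet_Ici]
      have hseteq : Set.Icc a b ∩ Set.Ici s = Set.Icc s b := by
        ext x
        simp only [Set.mem_inter_iff, Set.mem_Icc, Set.mem_Ici]
        constructor
        · rintro ⟨⟨_, h2⟩, h3⟩; exact ⟨h3, h2⟩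
        · rintro ⟨h1, h2⟩; exact ⟨⟨le_trans hs.1 h1, h2⟩, h1⟩
      rw [hseteq, hFTC s hs]
    have rhs_eq : ∫ r in Set.Icc a b, (∫ s in Set.Icc a b, F s r)
        = ∫ r in Set.Icc a b, t' r * (φ r - φ a) := by
      apply MeasureTheory.setIntegral_congr_fun measurableSet_Icc
      intro r hr
      show (∫ s in Set.Icc a b, F s r) = t' r * (φ r - φ a)
      have hFr : (fun s => F s r) = fun s => (Set.indicator (Set.Iic r) g s) * t' r := by
        funext s
        simp only [hFdef, Set.indicator_apply, Set.mem_Iic, ite_mul, zero_mul]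
      rw [hFr, MeasureTheory.integral_mul_const, MeasureTheory.setIntegral_indicator measurableSet_Iic]
      have hseteq : Set.Icc a b ∩ Set.Iic r = Set.Icc a r := by
        ext x
        simp only [Set.mem_inter_iff, Set.mem_Icc, Set.mem_Iic]
        constructor
        · rintro ⟨⟨h1, _⟩, h3⟩; exact ⟨h1, h3⟩
        · rintro ⟨h1, h2⟩; exact ⟨⟨h1, le_trans h2 hr.2⟩, h2⟩
      have hval : ∫ s in Set.Icc a r, g s = φ r - φ a := by
        have := hφeq r hr
        rw [MeasureTheory.integral_Icc_eq_integral_Ioc, ← intervalIntegral.integral_of_le hr.1]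
        linarith
      rw [hseteq, hval, mul_comm]
    calc ∫ s in Set.Icc a b, g s * (t b - t s)
        = ∫ s in Set.Icc a b, (∫ r in Set.Icc a b, F s r) := lhs_eq.symm
      _ = ∫ r in Set.Icc a b, (∫ s in Set.Icc a b, F s r) := swap
      _ = ∫ r in Set.Icc a b, t' r * (φ r - φ a) := rhs_eq
  -- pointwise inequality
  have pointwise : ∀ s ∈ Set.Icc a b,
      2 * t s * g s + 2 * t' s * (φ s + ε) ≤ g s ^ 2 / (φ s + ε) := by
    intro s hs
    have hpos : 0 < φ s + ε := by linarith [hφ0 s hs]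
    have hne : ρ s ≠ 0 := (hρpos s hs).ne'
    have h2 : 2 * t' s = -(t s) ^ 2 := by
      simp only [ht'def, htdef]
      field_simp
    have hid : g s ^ 2 / (φ s + ε) - (2 * t s * g s + 2 * t' s * (φ s + ε))
        = (g s - t s * (φ s + ε)) ^ 2 / (φ s + ε) := by
      rw [h2]
      field_simp
      ring
    have hnn : 0 ≤ (g s - t s * (φ s + ε)) ^ 2 / (φ s + ε) :=
      div_nonneg (sq_nonneg _) hpos.le
    linarith
  -- integrability pieces
  have p1int : IntegrableOn (fun s => 2 * t b * g s) (Set.Icc a b) := hg.const_mul _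
  have p2int : IntegrableOn (fun s => 2 * (g s * (t b - t s))) (Set.Icc a b) :=
    (hg.mul_continuousOn (continuousOn_const.sub htcont) isCompact_Icc).const_mul 2
  have p3int : IntegrableOn (fun s => 2 * (t' s * (φ s - φ a))) (Set.Icc a b) :=
    (continuousOn_const.mul (ht'cont.mul (hφcont.sub continuousOn_const))).integrableOn_Icc
  have p4int : IntegrableOn (fun s => 2 * (φ a + ε) * t' s) (Set.Icc a b) :=
    ht'int.const_mul _
  have hint2 : IntegrableOn (fun s => 2 * t s * g s + 2 * t' s * (φ s + ε)) (Set.Icc a b) := by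
    have heq : Set.EqOn (fun s => 2 * t s * g s + 2 * t' s * (φ s + ε))
        (fun s => 2 * t b * g s - 2 * (g s * (t b - t s)) + 2 * (t' s * (φ s - φ a))
          + 2 * (φ a + ε) * t' s) (Set.Icc a b) := by
      intro s _
      simp only
      ring
    exact IntegrableOn.congr_fun (((p1int.sub p2int).add p3int).add p4int) heq.symm measurableSet_Icc
  have step1 : ∫ s in Set.Icc a b, (2 * t s * g s + 2 * t' s * (φ s + ε))
      ≤ ∫ s in Set.Icc a b, g s ^ 2 / (φ s + ε) :=
    MeasureTheory.setIntegral_mono_on hint2 hInt measurableSet_Icc pointwise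
  have step2 : ∫ s in Set.Icc a b, (2 * t s * g s + 2 * t' s * (φ s + ε))
      = 4 * (B - A) ^ 2 / (b - a) := by
    have heq : Set.EqOn (fun s => 2 * t s * g s + 2 * t' s * (φ s + ε))
        (fun s => 2 * t b * g s - 2 * (g s * (t b - t s)) + 2 * (t' s * (φ s - φ a))
          + 2 * (φ a + ε) * t' s) (Set.Icc a b) := by
      intro s _
      simp only
      ring
    have q12 : IntegrableOn (fun s => 2 * t b * g s - 2 * (g s * (t b - t s)))
        (Set.Icc a b) := p1int.sub p2int
    have q123 : IntegrableOn (fun s => 2 * t b * g s - 2 * (g s * (t b - t s))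
        + 2 * (t' s * (φ s - φ a))) (Set.Icc a b) := q12.add p3int
    rw [MeasureTheory.setIntegral_congr_fun measurableSet_Icc heq]
    rw [MeasureTheory.integral_add q123 p4int,
        MeasureTheory.integral_add q12 p3int,
        MeasureTheory.integral_sub p1int p2int]
    rw [MeasureTheory.integral_const_mul, MeasureTheory.integral_const_mul,
        MeasureTheory.integral_const_mul, MeasureTheory.integral_const_mul, hgIcc, key]
    have hFTCa : ∫ r in Set.Icc a b, t' r = t b - t a := hFTC a ha
    rw [hFTCa]
    have htb : t b = 2 * L / B := by rw [htdef]; simp only; rw [hρb]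
    have hta : t a = 2 * L / A := by rw [htdef]; simp only; rw [hρa]
    have hφb : φ b = B ^ 2 - ε := by linarith
    have hφa : φ a = A ^ 2 - ε := by linarith
    rw [htb, hta, hφb, hφa, hLdef]
    field_simp
    ring
  linarith


lemma phi_continuousOn {g φ : ℝ → ℝ} {a b : ℝ} (hab : a ≤ b)
    (hg : IntegrableOn g (Set.Icc a b))
    (hφeq : ∀ s ∈ Set.Icc a b, φ s = φ a + ∫ r in a..s, g r) :
    ContinuousOn φ (Set.Icc a b) := by
  have h1 : IntegrableOn g (Set.uIcc a b) := by rwa [Set.uIcc_of_le hab]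
  have h2 : ContinuousOn (fun s => φ a + ∫ r in a..s, g r) (Set.Icc a b) := by
    have := intervalIntegral.continuousOn_primitive_interval (f := g) (μ := volume)
      (a := a) (b := b) h1
    rw [Set.uIcc_of_le hab] at this
    exact continuousOn_const.add this
  exact h2.congr hφeq

lemma piece_bound {g φ : ℝ → ℝ} {a b : ℝ} (hab : a < b)
    (hg : IntegrableOn g (Set.Icc a b))
    (hφeq : ∀ s ∈ Set.Icc a b, φ s = φ a + ∫ r in a..s, g r)
    (hφ0 : ∀ s ∈ Set.Icc a b, 0 ≤ φ s)
    (hpos : ∀ᵐ s ∂(volume.restrict (Set.Icc a b)), 0 < φ s)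
    {ε : ℝ} (hε : 0 < ε)
    (hE : (∫⁻ s in Set.Icc a b,
        ENNReal.ofReal (if 0 < φ s then g s ^ 2 / φ s else 0)) ≠ ⊤) :
    ENNReal.ofReal (4 * (Real.sqrt (φ b + ε) - Real.sqrt (φ a + ε)) ^ 2 / (b - a))
      ≤ ∫⁻ s in Set.Icc a b, ENNReal.ofReal (if 0 < φ s then g s ^ 2 / φ s else 0) := by
  set q : ℝ → ℝ := fun s => g s ^ 2 / (φ s + ε) with hqdef
  have hφcont : ContinuousOn φ (Set.Icc a b) := phi_continuousOn hab.le hg hφeq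
  have hcomp : ∀ᵐ s ∂(volume.restrict (Set.Icc a b)),
      ENNReal.ofReal (q s) ≤ ENNReal.ofReal (if 0 < φ s then g s ^ 2 / φ s else 0) := by
    filter_upwards [hpos] with s hs
    apply ENNReal.ofReal_le_ofReal
    rw [if_pos hs]
    simp only [hqdef]
    gcongr
    linarith
  have hle1 : (∫⁻ s in Set.Icc a b, ENNReal.ofReal (q s))
      ≤ ∫⁻ s in Set.Icc a b, ENNReal.ofReal (if 0 < φ s then g s ^ 2 / φ s else 0) :=
    lintegral_mono_ae hcomp
  have hq_meas : AEMeasurable q (volume.restrict (Set.Icc a b)) :=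
    ((hg.aemeasurable.pow_const 2).div
      ((hφcont.aemeasurable measurableSet_Icc).add aemeasurable_const))
  have hq_nonneg : 0 ≤ᵐ[volume.restrict (Set.Icc a b)] q :=
    (ae_restrict_mem measurableSet_Icc).mono fun s hs =>
      div_nonneg (sq_nonneg _) (by linarith [hφ0 s hs])
  have hq_int : IntegrableOn q (Set.Icc a b) :=
    ⟨hq_meas.aestronglyMeasurable,
      (hasFiniteIntegral_iff_ofReal hq_nonneg).2 (lt_of_le_of_lt hle1 hE.lt_top)⟩
  have hcore := core_ineq hab ε hε hg hφeq hφ0 hq_int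
  calc ENNReal.ofReal (4 * (Real.sqrt (φ b + ε) - Real.sqrt (φ a + ε)) ^ 2 / (b - a))
      ≤ ENNReal.ofReal (∫ s in Set.Icc a b, q s) := ENNReal.ofReal_le_ofReal hcore
    _ = ∫⁻ s in Set.Icc a b, ENNReal.ofReal (q s) :=
        ofReal_integral_eq_lintegral_ofReal hq_int hq_nonneg
    _ ≤ _ := hle1


lemma ae_ne_point (c : ℝ) : ∀ᵐ s : ℝ ∂volume, s ≠ c := by
  have h : volume ({c} : Set ℝ) = 0 := Real.volume_singleton
  rw [ae_iff]
  simpa using h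

lemma lhs_lower {v₀ x : ℝ} (hv₀ : 0 < v₀) (hx : 0 ≤ x) {g : ℝ → ℝ}
    (hg : IntegrableOn g (Set.Icc 0 1))
    (hφ0 : ∀ s ∈ Set.Icc (0:ℝ) 1, 0 ≤ v₀ + ∫ r in (0:ℝ)..s, g r)
    (hφ1 : (v₀ + ∫ r in (0:ℝ)..1, g r) = x) :
    ENNReal.ofReal (4 * (Real.sqrt x - Real.sqrt v₀) ^ 2)
      ≤ ∫⁻ s in Set.Icc (0:ℝ) 1, ENNReal.ofReal
          (if 0 < v₀ + ∫ r in (0:ℝ)..s, g r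
            then g s ^ 2 / (v₀ + ∫ r in (0:ℝ)..s, g r) else 0) := by
  set φ : ℝ → ℝ := fun s => v₀ + ∫ r in (0:ℝ)..s, g r with hφdef
  set f : ℝ → ℝ≥0∞ := fun s => ENNReal.ofReal (if 0 < φ s then g s ^ 2 / φ s else 0)
    with hfdef
  show ENNReal.ofReal (4 * (Real.sqrt x - Real.sqrt v₀) ^ 2)
      ≤ ∫⁻ s in Set.Icc (0:ℝ) 1, f s
  set E := ∫⁻ s in Set.Icc (0:ℝ) 1, f s with hEdef
  have hφa : φ 0 = v₀ := by simp [hφdef]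
  have hφb : φ 1 = x := hφ1
  by_cases hEtop : E = ⊤
  · rw [hEtop]; exact le_top
  have hφeq : ∀ s ∈ Set.Icc (0:ℝ) 1, φ s = φ 0 + ∫ r in (0:ℝ)..s, g r := by
    intro s _; rw [hφa]
  have hII : ∀ u v : ℝ, 0 ≤ u → u ≤ v → v ≤ 1 → IntervalIntegrable g volume u v := by
    intro u v h1 h2 h3
    apply MeasureTheory.IntegrableOn.intervalIntegrable
    apply hg.mono_set
    rw [Set.uIcc_of_le h2]
    exact Set.Icc_subset_Icc h1 h3
  by_cases hZ : ∃ s ∈ Set.Icc (0:ℝ) 1, φ s = 0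
  · -- there is a zero
    obtain ⟨s₀, hs₀, hs₀0⟩ := hZ
    set Z : Set ℝ := {s : ℝ | s ∈ Set.Icc (0:ℝ) 1 ∧ φ s = 0} with hZdef
    have hZne : Z.Nonempty := ⟨s₀, hs₀, hs₀0⟩
    have hφcont : ContinuousOn φ (Set.Icc 0 1) := phi_continuousOn zero_le_one hg hφeq
    have hZc : IsClosed Z := by
      have heq : Z = Set.Icc (0:ℝ) 1 ∩ φ ⁻¹' {0} := by
        ext s; simp [hZdef]
      rw [heq]
      exact hφcont.preimage_isClosed_of_isClosed isClosed_Icc isClosed_singleton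
    have hbddB : BddBelow Z := ⟨0, fun s hs => hs.1.1⟩
    have hbddA : BddAbove Z := ⟨1, fun s hs => hs.1.2⟩
    set α := sInf Z with hαdef
    set β := sSup Z with hβdef
    have hαZ : α ∈ Z := hZc.csInf_mem hZne hbddB
    have hβZ : β ∈ Z := hZc.csSup_mem hZne hbddA
    have hαβ : α ≤ β := csInf_le_csSup hZne hbddB hbddA
    have hα1 : α ≤ 1 := hαZ.1.2
    have hβ0 : 0 ≤ β := hβZ.1.1
    have hβ1 : β ≤ 1 := hβZ.1.2
    have hα0 : 0 < α := by
      rcases (hαZ.1.1).lt_or_eq with h | h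
      · exact h
      · exfalso
        have h0 : φ α = 0 := hαZ.2
        rw [← h, hφa] at h0; linarith
    have hpos1 : ∀ s : ℝ, 0 ≤ s → s < α → 0 < φ s := by
      intro s h1 h2
      have hmem : s ∈ Set.Icc (0:ℝ) 1 := ⟨h1, le_trans h2.le hα1⟩
      refine (hφ0 s hmem).lt_of_ne (fun h0 => ?_)
      have : s ∈ Z := ⟨hmem, h0.symm⟩
      exact absurd (csInf_le hbddB this) (not_le.2 h2)
    have hpos2 : ∀ s : ℝ, β < s → s ≤ 1 → 0 < φ s := by
      intro s h1 h2
      have hmem : s ∈ Set.Icc (0:ℝ) 1 := ⟨le_trans hβ0 h1.le, h2⟩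
      refine (hφ0 s hmem).lt_of_ne (fun h0 => ?_)
      have : s ∈ Z := ⟨hmem, h0.symm⟩
      exact absurd (le_csSup hbddA this) (not_le.2 h1)
    -- splitting
    have hdisj : Disjoint (Set.Icc (0:ℝ) α) (Set.Ioc β 1) := by
      rw [Set.disjoint_left]
      rintro s ⟨_, h1⟩ ⟨h2, _⟩
      linarith
    have hsplit : (∫⁻ s in Set.Icc (0:ℝ) α, f s) + (∫⁻ s in Set.Ioc β 1, f s) ≤ E := by
      rw [← lintegral_union measurableSet_Ioc hdisj]
      apply lintegral_mono_set
      rintro s (hs | hs)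
      · exact ⟨hs.1, le_trans hs.2 hα1⟩
      · exact ⟨le_trans hβ0 hs.1.le, hs.2⟩
    have hIocIcc : (∫⁻ s in Set.Ioc β 1, f s) = ∫⁻ s in Set.Icc β 1, f s := by
      rw [Measure.restrict_congr_set Ioc_ae_eq_Icc]
    have hE1top : (∫⁻ s in Set.Icc (0:ℝ) α, f s) ≠ ⊤ := by
      refine ne_top_of_le_ne_top hEtop ?_
      exact lintegral_mono_set (Set.Icc_subset_Icc le_rfl hα1)
    have hE2top : (∫⁻ s in Set.Icc β 1, f s) ≠ ⊤ := by
      refine ne_top_of_le_ne_top hEtop ?_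
      exact lintegral_mono_set (Set.Icc_subset_Icc hβ0 le_rfl)
    have key : ∀ ε : ℝ, 0 < ε →
        ENNReal.ofReal (4 * (Real.sqrt (v₀ + ε) - Real.sqrt ε) ^ 2)
          + ENNReal.ofReal (4 * (Real.sqrt (x + ε) - Real.sqrt ε) ^ 2) ≤ E := by
      intro ε hε
      -- piece 1
      have hsub1 : Set.Icc (0:ℝ) α ⊆ Set.Icc (0:ℝ) 1 := Set.Icc_subset_Icc le_rfl hα1
      have hb1 : ENNReal.ofReal (4 * (Real.sqrt (φ α + ε) - Real.sqrt (φ 0 + ε)) ^ 2 / (α - 0))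
          ≤ ∫⁻ s in Set.Icc (0:ℝ) α, f s := by
        apply piece_bound hα0 (hg.mono_set hsub1)
          (fun s hs => hφeq s (hsub1 hs)) (fun s hs => hφ0 s (hsub1 hs))
        · rw [ae_restrict_iff' measurableSet_Icc]
          filter_upwards [ae_ne_point α] with s hne hs
          exact hpos1 s hs.1 (lt_of_le_of_ne hs.2 hne)
        · exact hε
        · exact hE1top
      have hb1' : ENNReal.ofReal (4 * (Real.sqrt (v₀ + ε) - Real.sqrt ε) ^ 2)
          ≤ ∫⁻ s in Set.Icc (0:ℝ) α, f s := by
        refine le_trans ?_ hb1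
        apply ENNReal.ofReal_le_ofReal
        rw [hαZ.2, hφa, zero_add, sub_zero]
        have h1 : (Real.sqrt ε - Real.sqrt (v₀ + ε)) ^ 2
            = (Real.sqrt (v₀ + ε) - Real.sqrt ε) ^ 2 := by ring
        rw [h1]
        rw [le_div_iff₀ hα0]
        nlinarith [sq_nonneg (Real.sqrt (v₀ + ε) - Real.sqrt ε)]
      -- piece 2
      have hb2' : ENNReal.ofReal (4 * (Real.sqrt (x + ε) - Real.sqrt ε) ^ 2)
          ≤ ∫⁻ s in Set.Ioc β 1, f s := by
        rcases lt_or_eq_of_le hβ1 with hβlt | hβeq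
        · rw [hIocIcc]
          have hsub2 : Set.Icc β 1 ⊆ Set.Icc (0:ℝ) 1 := Set.Icc_subset_Icc hβ0 le_rfl
          have hφeqβ : ∀ s ∈ Set.Icc β 1, φ s = φ β + ∫ r in β..s, g r := by
            intro s hs
            have hadd := intervalIntegral.integral_add_adjacent_intervals
              (hII 0 β le_rfl hβ0 hβ1) (hII β s hβ0 hs.1 hs.2)
            show v₀ + ∫ r in (0:ℝ)..s, g r = (v₀ + ∫ r in (0:ℝ)..β, g r) + ∫ r in β..s, g r
            rw [← hadd]; ring
          have hb2 : ENNReal.ofReal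
              (4 * (Real.sqrt (φ 1 + ε) - Real.sqrt (φ β + ε)) ^ 2 / (1 - β))
              ≤ ∫⁻ s in Set.Icc β 1, f s := by
            apply piece_bound hβlt (hg.mono_set hsub2) hφeqβ
              (fun s hs => hφ0 s (hsub2 hs))
            · rw [ae_restrict_iff' measurableSet_Icc]
              filter_upwards [ae_ne_point β] with s hne hs
              exact hpos2 s (lt_of_le_of_ne hs.1 (Ne.symm hne)) hs.2
            · exact hε
            · exact hE2top
          refine le_trans ?_ hb2
          apply ENNReal.ofReal_le_ofReal
          rw [hβZ.2, hφb, zero_add]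
          rw [le_div_iff₀ (by linarith : (0:ℝ) < 1 - β)]
          nlinarith [sq_nonneg (Real.sqrt (x + ε) - Real.sqrt ε)]
        · -- β = 1, so x = φ 1 = φ β = 0
          have hx0 : x = 0 := by rw [← hφb, ← hβeq]; exact hβZ.2
          rw [hx0, zero_add, sub_self]
          simp
      calc ENNReal.ofReal (4 * (Real.sqrt (v₀ + ε) - Real.sqrt ε) ^ 2)
            + ENNReal.ofReal (4 * (Real.sqrt (x + ε) - Real.sqrt ε) ^ 2)
          ≤ (∫⁻ s in Set.Icc (0:ℝ) α, f s) + (∫⁻ s in Set.Ioc β 1, f s) :=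
            add_le_add hb1' hb2'
        _ ≤ E := hsplit
    -- take the limit ε → 0⁺
    have htend : Tendsto (fun ε : ℝ =>
        ENNReal.ofReal (4 * (Real.sqrt (v₀ + ε) - Real.sqrt ε) ^ 2)
          + ENNReal.ofReal (4 * (Real.sqrt (x + ε) - Real.sqrt ε) ^ 2))
        (𝓝[>] (0:ℝ))
        (𝓝 (ENNReal.ofReal (4 * (Real.sqrt (v₀ + 0) - Real.sqrt 0) ^ 2)
          + ENNReal.ofReal (4 * (Real.sqrt (x + 0) - Real.sqrt 0) ^ 2))) := by
      apply Tendsto.mono_left _ nhdsWithin_le_nhds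
      have hc1 : Continuous fun ε : ℝ => 4 * (Real.sqrt (v₀ + ε) - Real.sqrt ε) ^ 2 :=
        continuous_const.mul (((Real.continuous_sqrt.comp
          (continuous_const.add continuous_id)).sub Real.continuous_sqrt).pow 2)
      have hc2 : Continuous fun ε : ℝ => 4 * (Real.sqrt (x + ε) - Real.sqrt ε) ^ 2 :=
        continuous_const.mul (((Real.continuous_sqrt.comp
          (continuous_const.add continuous_id)).sub Real.continuous_sqrt).pow 2)
      apply Tendsto.add
      · exact (ENNReal.continuous_ofReal.tendsto _).comp (hc1.tendsto 0)
      · exact (ENNReal.continuous_ofReal.tendsto _).comp (hc2.tendsto 0)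
    have hEge : ENNReal.ofReal (4 * (Real.sqrt (v₀ + 0) - Real.sqrt 0) ^ 2)
        + ENNReal.ofReal (4 * (Real.sqrt (x + 0) - Real.sqrt 0) ^ 2) ≤ E := by
      refine le_of_tendsto htend ?_
      filter_upwards [self_mem_nhdsWithin] with ε hε
      exact key ε hε
    refine le_trans ?_ hEge
    rw [add_zero, add_zero, Real.sqrt_zero, sub_zero, sub_zero]
    rw [← ENNReal.ofReal_add (by positivity) (by positivity)]
    apply ENNReal.ofReal_le_ofReal
    have h1 : Real.sqrt v₀ ^ 2 = v₀ := Real.sq_sqrt hv₀.le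
    have h2 : Real.sqrt x ^ 2 = x := Real.sq_sqrt hx
    nlinarith [mul_nonneg (Real.sqrt_nonneg x) (Real.sqrt_nonneg v₀)]
  · -- no zero
    push_neg at hZ
    have hpos : ∀ s ∈ Set.Icc (0:ℝ) 1, 0 < φ s := fun s hs =>
      (hφ0 s hs).lt_of_ne (fun h0 => hZ s hs h0.symm)
    have key : ∀ ε : ℝ, 0 < ε →
        ENNReal.ofReal (4 * (Real.sqrt (x + ε) - Real.sqrt (v₀ + ε)) ^ 2 / (1 - 0)) ≤ E := by
      intro ε hε
      have hb := piece_bound (zero_lt_one) hg hφeq hφ0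
        (by rw [ae_restrict_iff' measurableSet_Icc]
            exact Filter.Eventually.of_forall (fun s hs => hpos s hs)) hε hEtop
      rwa [hφa, hφb] at hb
    have htend : Tendsto (fun ε : ℝ =>
        ENNReal.ofReal (4 * (Real.sqrt (x + ε) - Real.sqrt (v₀ + ε)) ^ 2 / (1 - 0)))
        (𝓝[>] (0:ℝ))
        (𝓝 (ENNReal.ofReal (4 * (Real.sqrt (x + 0) - Real.sqrt (v₀ + 0)) ^ 2 / (1 - 0)))) := by
      apply Tendsto.mono_left _ nhdsWithin_le_nhds
      have hc3 : Continuous fun ε : ℝ =>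
          4 * (Real.sqrt (x + ε) - Real.sqrt (v₀ + ε)) ^ 2 / (1 - 0) :=
        (continuous_const.mul (((Real.continuous_sqrt.comp
          (continuous_const.add continuous_id)).sub (Real.continuous_sqrt.comp
          (continuous_const.add continuous_id))).pow 2)).div_const _
      exact (ENNReal.continuous_ofReal.tendsto _).comp (hc3.tendsto 0)
    have hEge := le_of_tendsto htend (by
      filter_upwards [self_mem_nhdsWithin] with ε hε
      exact key ε hε)
    refine le_trans (le_of_eq ?_) hEge
    norm_num


lemma finite_restrict : IsFiniteMeasure (volume.restrict (Set.Icc (0:ℝ) 1)) := by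
  constructor
  rw [Measure.restrict_apply_univ]
  simp [Real.volume_Icc]

-- RHS lower bound for any admissible h
lemma rhs_ge {v₀ x : ℝ} (hv₀ : 0 < v₀) (hx : 0 ≤ x) {h : ℝ → ℝ}
    (hMem : MemLp h 2 (volume.restrict (Set.Icc (0:ℝ) 1)))
    (hψ1 : (Real.sqrt v₀ + ∫ r in (0:ℝ)..1, h r) = Real.sqrt x) :
    ENNReal.ofReal ((Real.sqrt x - Real.sqrt v₀) ^ 2)
      ≤ ∫⁻ s in Set.Icc (0:ℝ) 1, ENNReal.ofReal (h s ^ 2) := by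
  haveI := finite_restrict
  set m : ℝ := Real.sqrt x - Real.sqrt v₀ with hmdef
  have hint2 : Integrable (fun s => h s ^ 2) (volume.restrict (Set.Icc (0:ℝ) 1)) :=
    hMem.integrable_sq
  have hint1 : Integrable h (volume.restrict (Set.Icc (0:ℝ) 1)) :=
    hMem.integrable one_le_two
  have hvol : (volume (Set.Icc (0:ℝ) 1)).toReal = 1 := by
    simp [Real.volume_Icc]
  have hm : ∫ s in Set.Icc (0:ℝ) 1, h s = m := by
    rw [MeasureTheory.integral_Icc_eq_integral_Ioc,
      ← intervalIntegral.integral_of_le zero_le_one]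
    rw [hmdef]; linarith
  have hcs : m ^ 2 ≤ ∫ s in Set.Icc (0:ℝ) 1, h s ^ 2 := by
    have hnn : 0 ≤ ∫ s in Set.Icc (0:ℝ) 1, (h s - m) ^ 2 :=
      integral_nonneg (fun s => sq_nonneg _)
    have hexp : ∫ s in Set.Icc (0:ℝ) 1, (h s - m) ^ 2
        = (∫ s in Set.Icc (0:ℝ) 1, h s ^ 2) - 2 * m * (∫ s in Set.Icc (0:ℝ) 1, h s)
          + m ^ 2 * (volume (Set.Icc (0:ℝ) 1)).toReal := by
      have h1 : (fun s => (h s - m) ^ 2)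
          = fun s => (h s ^ 2 - 2 * m * h s) + m ^ 2 := by
        funext s; ring
      have i12 : Integrable (fun s => h s ^ 2 - 2 * m * h s)
          (volume.restrict (Set.Icc (0:ℝ) 1)) := hint2.sub (hint1.const_mul (2*m))
      rw [h1, MeasureTheory.integral_add i12
        (integrable_const _), MeasureTheory.integral_sub hint2 (hint1.const_mul (2*m)),
        MeasureTheory.integral_const_mul, MeasureTheory.setIntegral_const]
      simp [smul_eq_mul, mul_comm]
    rw [hexp, hm, hvol] at hnn
    nlinarith
  calc ENNReal.ofReal (m ^ 2) ≤ ENNReal.ofReal (∫ s in Set.Icc (0:ℝ) 1, h s ^ 2) :=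
        ENNReal.ofReal_le_ofReal hcs
    _ = ∫⁻ s in Set.Icc (0:ℝ) 1, ENNReal.ofReal (h s ^ 2) :=
        ofReal_integral_eq_lintegral_ofReal hint2
          (Filter.Eventually.of_forall fun s => sq_nonneg _)

-- RHS witness
lemma rhs_witness {v₀ x : ℝ} (hv₀ : 0 < v₀) (hx : 0 ≤ x) :
    ∃ h : ℝ → ℝ, MemLp h 2 (volume.restrict (Set.Icc (0:ℝ) 1)) ∧
      (∀ s ∈ Set.Icc (0:ℝ) 1, 0 ≤ Real.sqrt v₀ + ∫ r in (0:ℝ)..s, h r) ∧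
      (Real.sqrt v₀ + ∫ r in (0:ℝ)..1, h r) = Real.sqrt x ∧
      (∫⁻ s in Set.Icc (0:ℝ) 1, ENNReal.ofReal (h s ^ 2))
        = ENNReal.ofReal ((Real.sqrt x - Real.sqrt v₀) ^ 2) := by
  haveI := finite_restrict
  set L : ℝ := Real.sqrt x - Real.sqrt v₀ with hLdef
  refine ⟨fun _ => L, memLp_const L, ?_, ?_, ?_⟩
  · intro s hs
    rw [intervalIntegral.integral_const]
    simp only [smul_eq_mul, sub_zero]
    nlinarith [Real.sqrt_nonneg x, Real.sqrt_nonneg v₀, hs.1, hs.2]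
  · rw [intervalIntegral.integral_const]
    simp only [smul_eq_mul, sub_zero, one_mul]
    rw [hLdef]; ring
  · rw [MeasureTheory.setLIntegral_const]
    simp [Real.volume_Icc]

-- LHS witness
lemma lhs_witness {v₀ x : ℝ} (hv₀ : 0 < v₀) (hx : 0 ≤ x) :
    ∃ g : ℝ → ℝ, IntegrableOn g (Set.Icc 0 1) ∧
      (∀ s ∈ Set.Icc (0 : ℝ) 1, 0 ≤ v₀ + ∫ r in (0 : ℝ)..s, g r) ∧
      (v₀ + ∫ r in (0 : ℝ)..1, g r) = x ∧
      (∫⁻ s in Set.Icc (0 : ℝ) 1,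
          ENNReal.ofReal
            (if 0 < v₀ + ∫ r in (0 : ℝ)..s, g r
              then g s ^ 2 / (v₀ + ∫ r in (0 : ℝ)..s, g r) else 0))
        = ENNReal.ofReal (4 * (Real.sqrt x - Real.sqrt v₀) ^ 2) := by
  set L : ℝ := Real.sqrt x - Real.sqrt v₀ with hLdef
  set ψ : ℝ → ℝ := fun s => Real.sqrt v₀ + s * L with hψdef
  set g : ℝ → ℝ := fun s => 2 * L * ψ s with hgdef
  have hgcont : Continuous g := by
    simp only [hgdef, hψdef]
    fun_prop
  have hprim : ∀ s : ℝ, (∫ r in (0:ℝ)..s, g r) = 2 * L * Real.sqrt v₀ * s + L ^ 2 * s ^ 2 := by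
    intro s
    have hderiv : ∀ r : ℝ, HasDerivAt
        (fun u : ℝ => 2 * L * Real.sqrt v₀ * u + L ^ 2 * u ^ 2) (g r) r := by
      intro r
      have h1 : HasDerivAt (fun u : ℝ => 2 * L * Real.sqrt v₀ * u)
          (2 * L * Real.sqrt v₀) r := by
        simpa using (hasDerivAt_id r).const_mul (2 * L * Real.sqrt v₀)
      have h2 : HasDerivAt (fun u : ℝ => L ^ 2 * u ^ 2) (L ^ 2 * (2 * r)) r := by
        simpa using (hasDerivAt_pow 2 r).const_mul (L ^ 2)
      have := h1.add h2
      apply this.congr_deriv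
      simp only [hgdef, hψdef]
      ring
    rw [intervalIntegral.integral_eq_sub_of_hasDerivAt (fun r _ => hderiv r)
      (hgcont.intervalIntegrable 0 s)]
    ring
  have hφψ : ∀ s : ℝ, v₀ + (∫ r in (0:ℝ)..s, g r) = ψ s ^ 2 := by
    intro s
    rw [hprim s]
    have : Real.sqrt v₀ ^ 2 = v₀ := Real.sq_sqrt hv₀.le
    simp only [hψdef]
    nlinarith
  refine ⟨g, hgcont.integrableOn_Icc, ?_, ?_, ?_⟩
  · intro s _
    rw [hφψ s]
    exact sq_nonneg _
  · rw [hφψ 1]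
    have h1 : ψ 1 = Real.sqrt x := by simp [hψdef, hLdef]
    rw [h1]
    exact Real.sq_sqrt hx
  · have hnull : volume {s : ℝ | ψ s = 0} = 0 := by
      by_cases hL : L = 0
      · have : {s : ℝ | ψ s = 0} = ∅ := by
          ext s
          simp only [Set.mem_setOf_eq, Set.mem_empty_iff_false, iff_false]
          rw [hψdef]
          simp only [hL, mul_zero, add_zero]
          exact (Real.sqrt_pos.2 hv₀).ne'
        rw [this]; simp
      · refine measure_mono_null (t := {-Real.sqrt v₀ / L}) ?_ Real.volume_singleton
        intro s hs
        simp only [Set.mem_setOf_eq, hψdef] at hs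
        simp only [Set.mem_singleton_iff]
        field_simp
        linarith
    have hae : ∀ᵐ s : ℝ ∂(volume.restrict (Set.Icc (0:ℝ) 1)),
        ENNReal.ofReal
          (if 0 < v₀ + ∫ r in (0:ℝ)..s, g r
            then g s ^ 2 / (v₀ + ∫ r in (0:ℝ)..s, g r) else 0)
          = ENNReal.ofReal (4 * L ^ 2) := by
      apply ae_restrict_of_ae
      have hae0 : ∀ᵐ s : ℝ ∂volume, ψ s ≠ 0 := by
        rw [ae_iff]
        simpa [not_not] using hnull
      filter_upwards [hae0] with s hs
      have hpos : 0 < v₀ + ∫ r in (0:ℝ)..s, g r := by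
        rw [hφψ s]
        refine (sq_nonneg (ψ s)).lt_of_ne (fun hc => hs ?_)
        exact (pow_eq_zero_iff (two_ne_zero)).1 hc.symm
      rw [if_pos hpos]
      congr 1
      rw [hφψ s]
      rw [hgdef]
      simp only
      rw [div_eq_iff (by rw [← hφψ s]; exact hpos.ne')]
      ring
    rw [lintegral_congr_ae hae, MeasureTheory.setLIntegral_const]
    simp [Real.volume_Icc]


/-- Change of variables `ψ = √φ`: for `x ≥ 0`, the minimal Dirichlet-type energy
`∫₀¹ φ'(s)²/φ(s) 1_{φ(s)>0} ds` over nonnegative absolutely continuous `φ` with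
`φ(0) = v₀`, `φ(1) = x`, equals `4` times the minimal energy `∫₀¹ ψ'(s)² ds` over
nonnegative absolutely continuous `ψ` with `ψ(0) = √v₀`, `ψ(1) = √x`. -/
theorem energy_infimum_change_of_variables
    (ξ v₀ : ℝ) (hξ : 0 < ξ) (hv₀ : 0 < v₀) (x : ℝ) (hx : 0 ≤ x) :
    sInf {E : ℝ≥0∞ | ∃ g : ℝ → ℝ, IntegrableOn g (Set.Icc 0 1) ∧
        (∀ s ∈ Set.Icc (0 : ℝ) 1, 0 ≤ v₀ + ∫ r in (0 : ℝ)..s, g r) ∧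
        (v₀ + ∫ r in (0 : ℝ)..1, g r) = x ∧
        E = ∫⁻ s in Set.Icc (0 : ℝ) 1,
              ENNReal.ofReal
                (if 0 < v₀ + ∫ r in (0 : ℝ)..s, g r
                  then g s ^ 2 / (v₀ + ∫ r in (0 : ℝ)..s, g r) else 0)}
      = 4 * sInf {E : ℝ≥0∞ | ∃ h : ℝ → ℝ,
          MemLp h 2 (volume.restrict (Set.Icc (0 : ℝ) 1)) ∧
          (∀ s ∈ Set.Icc (0 : ℝ) 1, 0 ≤ Real.sqrt v₀ + ∫ r in (0 : ℝ)..s, h r) ∧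
          (Real.sqrt v₀ + ∫ r in (0 : ℝ)..1, h r) = Real.sqrt x ∧
          E = ∫⁻ s in Set.Icc (0 : ℝ) 1, ENNReal.ofReal (h s ^ 2)} := by
  have hLval : sInf {E : ℝ≥0∞ | ∃ g : ℝ → ℝ, IntegrableOn g (Set.Icc 0 1) ∧
        (∀ s ∈ Set.Icc (0 : ℝ) 1, 0 ≤ v₀ + ∫ r in (0 : ℝ)..s, g r) ∧
        (v₀ + ∫ r in (0 : ℝ)..1, g r) = x ∧
        E = ∫⁻ s in Set.Icc (0 : ℝ) 1,
              ENNReal.ofReal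
                (if 0 < v₀ + ∫ r in (0 : ℝ)..s, g r
                  then g s ^ 2 / (v₀ + ∫ r in (0 : ℝ)..s, g r) else 0)}
      = ENNReal.ofReal (4 * (Real.sqrt x - Real.sqrt v₀) ^ 2) := by
    apply le_antisymm
    · obtain ⟨g, h1, h2, h3, h4⟩ := lhs_witness hv₀ hx
      exact sInf_le ⟨g, h1, h2, h3, h4.symm⟩
    · apply le_sInf
      rintro E ⟨g, h1, h2, h3, rfl⟩
      exact lhs_lower hv₀ hx h1 h2 h3
  have hRval : sInf {E : ℝ≥0∞ | ∃ h : ℝ → ℝ,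
          MemLp h 2 (volume.restrict (Set.Icc (0 : ℝ) 1)) ∧
          (∀ s ∈ Set.Icc (0 : ℝ) 1, 0 ≤ Real.sqrt v₀ + ∫ r in (0 : ℝ)..s, h r) ∧
          (Real.sqrt v₀ + ∫ r in (0 : ℝ)..1, h r) = Real.sqrt x ∧
          E = ∫⁻ s in Set.Icc (0 : ℝ) 1, ENNReal.ofReal (h s ^ 2)}
      = ENNReal.ofReal ((Real.sqrt x - Real.sqrt v₀) ^ 2) := by
    apply le_antisymm
    · obtain ⟨h, h1, h2, h3, h4⟩ := rhs_witness hv₀ hx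
      exact sInf_le ⟨h, h1, h2, h3, h4.symm⟩
    · apply le_sInf
      rintro E ⟨h, h1, h2, h3, rfl⟩
      exact rhs_ge hv₀ hx h1 h3
  rw [hLval, hRval]
  rw [show (4:ℝ≥0∞) = ENNReal.ofReal 4 from by norm_num,
    ← ENNReal.ofReal_mul (by norm_num : (0:ℝ) ≤ 4)]
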